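/- Define h(c) = (1/(4c))·((√(1+32c) − √(1+16c))/(√(1+32c) + √(1+16c)))^{1/√(1+16c)} for c > 0. Then for each c > 0, with f_c the solution of f_c'(r) = cr/(f_c(r)−r/2), f_c(0)=1/2, the following are equivalent: (a) 2c = f_c(1)² − f_c(1)/2; (b) f_c(1) = (1 + √(1+32c))/4; (c) h(c) = 1. -/

import Mathlib

open Set

/-- The function h(c) from the right boundary condition (real power). -/
noncomputable def hAux (c : ℝ) : ℝ :=
  (1/(4*c)) * ((Real.sqrt (1 + 32*c) - Real.sqrt (1 + 16*c))
      / (Real.sqrt (1 + 32*c) + Real.sqrt (1 + 16*c)))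
    ^ (1 / Real.sqrt (1 + 16*c))


private lemma bracket_zero (c b F x e : ℝ) (hb0 : b ≠ 0) (hb2 : b^2 = 1+16*c)
    (he : e * (F - x/2) = c*x) :
    (-(b-1)/(2*b)) * (e - (1+b)/4) * (F - (1-b)/4*x)
      + (-(b+1)/(2*b)) * (e - (1-b)/4) * (F - (1+b)/4*x) = 0 := by
  field_simp
  linear_combination (-32*b)*he + 2*b*x*hb2

private lemma phi_const (c b : ℝ) (hc : 0 < c) (hb : 1 < b) (hb2 : b^2 = 1+16*c)
    (f : ℝ → ℝ) (hf : ContinuousOn f (Set.Icc 0 1)) (hf0 : f 0 = 1/2)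
    (hder : ∀ r ∈ Set.Ico (0:ℝ) 1,
      HasDerivWithinAt f (c * r / (f r - r/2)) (Set.Icc 0 1) r)
    (t : ℝ) (ht : t ∈ Set.Icc (0:ℝ) 1)
    (hpos : ∀ s ∈ Set.Icc (0:ℝ) t, (1+b)/4 * s < f s) :
    (f t - (1+b)/4 * t) ^ (-(b-1)/(2*b)) * (f t - (1-b)/4 * t) ^ (-(b+1)/(2*b)) = 2 := by
  have hb0 : (0:ℝ) < b := lt_trans one_pos hb
  have hIcc : Icc (0:ℝ) t ⊆ Icc 0 1 := Icc_subset_Icc le_rfl ht.2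
  set gp : ℝ := (1+b)/4 with hgp
  set gm : ℝ := (1-b)/4 with hgm
  set Ap : ℝ := -(b-1)/(2*b) with hAp
  set Am : ℝ := -(b+1)/(2*b) with hAm
  have hu : ∀ s ∈ Icc (0:ℝ) t, 0 < f s - gp*s := fun s hs => sub_pos.mpr (hpos s hs)
  have hw : ∀ s ∈ Icc (0:ℝ) t, 0 < f s - gm*s := by
    intro s hs
    have h1 := hu s hs
    have : gm * s ≤ gp * s := by
      apply mul_le_mul_of_nonneg_right _ hs.1
      rw [hgm, hgp]; linarith
    linarith
  have hfc : ContinuousOn f (Icc 0 t) := hf.mono hIcc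
  have hucont : ContinuousOn (fun r => f r - gp*r) (Icc 0 t) :=
    hfc.sub ((continuous_const.mul continuous_id).continuousOn)
  have hwcont : ContinuousOn (fun r => f r - gm*r) (Icc 0 t) :=
    hfc.sub ((continuous_const.mul continuous_id).continuousOn)
  have hcont : ContinuousOn
      (fun r => (f r - gp*r) ^ Ap * (f r - gm*r) ^ Am) (Icc 0 t) :=
    (hucont.rpow_const (fun s hs => Or.inl (hu s hs).ne')).mul
      (hwcont.rpow_const (fun s hs => Or.inl (hw s hs).ne'))
  have hderiv : ∀ x ∈ Ico (0:ℝ) t, HasDerivWithinAt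
      (fun r => (f r - gp*r) ^ Ap * (f r - gm*r) ^ Am) 0 (Ici x) x := by
    intro x hx
    have hxIcc : x ∈ Icc (0:ℝ) t := ⟨hx.1, hx.2.le⟩
    have hx1 : x ∈ Ico (0:ℝ) 1 := ⟨hx.1, lt_of_lt_of_le hx.2 ht.2⟩
    have hmem : Icc (0:ℝ) 1 ∈ nhdsWithin x (Ici x) := by
      have h1 : Ici x ∩ Iio 1 ∈ nhdsWithin x (Ici x) :=
        inter_mem_nhdsWithin _ (Iio_mem_nhds hx1.2)
      exact Filter.mem_of_superset h1 (fun y hy => ⟨le_trans hx.1 hy.1, hy.2.le⟩)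
    have hfd : HasDerivWithinAt f (c*x/(f x - x/2)) (Ici x) x :=
      (hder x hx1).mono_of_mem_nhdsWithin hmem
    have hux : 0 < f x - gp*x := hu x hxIcc
    have hwx : 0 < f x - gm*x := hw x hxIcc
    have hdx : 0 < f x - x/2 := by
      have : gp * x ≥ x/2 := by
        rw [hgp]; nlinarith [hx.1, hb]
      linarith
    have hgpd : HasDerivWithinAt (fun r : ℝ => gp * r) gp (Ici x) x := by
      simpa using ((hasDerivAt_id x).const_mul gp).hasDerivWithinAt
    have hgmd : HasDerivWithinAt (fun r : ℝ => gm * r) gm (Ici x) x := by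
      simpa using ((hasDerivAt_id x).const_mul gm).hasDerivWithinAt
    have h1 : HasDerivWithinAt (fun r => (f r - gp*r) ^ Ap)
        ((c*x/(f x - x/2) - gp) * Ap * (f x - gp*x) ^ (Ap-1)) (Ici x) x :=
      (hfd.sub hgpd).rpow_const (Or.inl hux.ne')
    have h2 : HasDerivWithinAt (fun r => (f r - gm*r) ^ Am)
        ((c*x/(f x - x/2) - gm) * Am * (f x - gm*x) ^ (Am-1)) (Ici x) x :=
      (hfd.sub hgmd).rpow_const (Or.inl hwx.ne')
    have hD := h1.mul h2
    have he : (c*x/(f x - x/2)) * (f x - x/2) = c*x := div_mul_cancel₀ _ hdx.ne'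
    have hbr := bracket_zero c b (f x) x (c*x/(f x - x/2)) hb0.ne' hb2 he
    rw [← hgp, ← hgm, ← hAp, ← hAm] at hbr
    have hU : (f x - gp*x) ^ Ap = (f x - gp*x) * (f x - gp*x) ^ (Ap-1) := by
      rw [Real.rpow_sub hux, Real.rpow_one]; field_simp
    have hW : (f x - gm*x) ^ Am = (f x - gm*x) * (f x - gm*x) ^ (Am-1) := by
      rw [Real.rpow_sub hwx, Real.rpow_one]; field_simp
    refine hD.congr_deriv (Eq.symm ?_)
    rw [hU, hW]
    linear_combination
      (-((f x - gp*x) ^ (Ap-1) * (f x - gm*x) ^ (Am-1))) * hbr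
  have hall := constant_of_has_deriv_right_zero hcont hderiv t
    (right_mem_Icc.mpr ht.1)
  rw [hall]
  have hApAm : Ap + Am = -1 := by rw [hAp, hAm]; field_simp; ring
  rw [hf0]
  norm_num
  rw [← Real.rpow_add (by norm_num : (0:ℝ) < 1/2), hApAm]
  norm_num


private lemma above_line (c b : ℝ) (hc : 0 < c) (hb : 1 < b) (hb2 : b^2 = 1+16*c)
    (f : ℝ → ℝ) (hf : ContinuousOn f (Set.Icc 0 1)) (hf0 : f 0 = 1/2)
    (hder : ∀ r ∈ Set.Ico (0:ℝ) 1,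
      HasDerivWithinAt f (c * r / (f r - r/2)) (Set.Icc 0 1) r) :
    ∀ r ∈ Set.Icc (0:ℝ) 1, (1+b)/4 * r < f r := by
  have hb0 : (0:ℝ) < b := lt_trans one_pos hb
  set gp : ℝ := (1+b)/4 with hgp
  set gm : ℝ := (1-b)/4 with hgm
  set Ap : ℝ := -(b-1)/(2*b) with hAp
  set Am : ℝ := -(b+1)/(2*b) with hAm
  by_contra hcon
  push_neg at hcon
  obtain ⟨r0, hr0, hr0le⟩ := hcon
  set S : Set ℝ := {r | r ∈ Icc (0:ℝ) 1 ∧ f r ≤ gp * r} with hSdef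
  have hSne : S.Nonempty := ⟨r0, hr0, hr0le⟩
  have hgpc : ContinuousOn (fun r => f r - gp*r) (Icc 0 1) :=
    hf.sub ((continuous_const.mul continuous_id).continuousOn)
  have hSclosed : IsClosed S := by
    have hSeq : S = Icc (0:ℝ) 1 ∩ (fun r => f r - gp*r) ⁻¹' Iic 0 := by
      ext r
      simp only [hSdef, mem_setOf_eq, mem_inter_iff, mem_preimage, mem_Iic, sub_nonpos]
    rw [hSeq]
    exact hgpc.preimage_isClosed_of_isClosed isClosed_Icc isClosed_Iic
  have hBdd : BddBelow S := ⟨0, fun r hr => hr.1.1⟩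
  set t := sInf S with htdef
  have htS : t ∈ S := hSclosed.csInf_mem hSne hBdd
  have ht1 : t ∈ Icc (0:ℝ) 1 := htS.1
  have htpos : 0 < t := by
    rcases lt_or_eq_of_le ht1.1 with h | h
    · exact h
    · exfalso
      have := htS.2
      rw [← h] at this
      rw [hf0] at this
      simp at this
      linarith
  have hlt : ∀ s ∈ Icc (0:ℝ) 1, s < t → gp * s < f s := by
    intro s hs hst
    by_contra h
    push_neg at h
    exact absurd (csInf_le hBdd ⟨hs, h⟩) (not_le.mpr hst)
  have hft_ge : gp * t ≤ f t := by
    have hCclosed : IsClosed (Icc (0:ℝ) 1 ∩ (fun r => f r - gp*r) ⁻¹' Ici 0) :=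
      hgpc.preimage_isClosed_of_isClosed isClosed_Icc isClosed_Ici
    have hsub : Ico (0:ℝ) t ⊆ Icc (0:ℝ) 1 ∩ (fun r => f r - gp*r) ⁻¹' Ici 0 := by
      intro s hs
      have hs1 : s ∈ Icc (0:ℝ) 1 := ⟨hs.1, (lt_of_lt_of_le hs.2 ht1.2).le⟩
      exact ⟨hs1, by simpa [sub_nonneg] using (hlt s hs1 hs.2).le⟩
    have htcl : t ∈ closure (Ico (0:ℝ) t) := by
      rw [closure_Ico htpos.ne]
      exact right_mem_Icc.mpr htpos.le
    have := (hCclosed.closure_subset_iff.mpr hsub) htcl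
    simpa [sub_nonneg] using this.2
  have hft : f t = gp * t := le_antisymm htS.2 hft_ge
  have hPhi : ∀ s ∈ Ico (0:ℝ) t, (f s - gp*s)^Ap * (f s - gm*s)^Am = 2 := by
    intro s hs
    exact phi_const c b hc hb hb2 f hf hf0 hder s
      ⟨hs.1, le_trans hs.2.le ht1.2⟩
      (fun σ hσ => hlt σ ⟨hσ.1, le_trans hσ.2 (le_trans hs.2.le ht1.2)⟩
        (lt_of_le_of_lt hσ.2 hs.2))
  have hwpos : ∀ s ∈ Icc (0:ℝ) t, 0 < f s - gm*s := by
    intro s hs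
    rcases lt_or_eq_of_le hs.2 with h | h
    · have h1 : gp * s < f s := hlt s ⟨hs.1, (lt_of_lt_of_le h ht1.2).le⟩ h
      have : gm * s ≤ gp * s := by
        apply mul_le_mul_of_nonneg_right _ hs.1
        rw [hgm, hgp]; linarith
      linarith
    · rw [h, hft]
      have : gp * t - gm * t = (b/2) * t := by rw [hgp, hgm]; ring
      rw [this]
      positivity
  have hApne : Ap ≠ 0 := by
    rw [hAp, neg_div]
    exact neg_ne_zero.mpr (ne_of_gt (div_pos (by linarith) (by linarith)))
  set G : ℝ → ℝ := fun s => (2 * (f s - gm*s) ^ (-Am)) ^ (1/Ap) with hGdef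
  have hEq : ∀ s ∈ Ico (0:ℝ) t, f s - gp*s = G s := by
    intro s hs
    have hsIcc : s ∈ Icc (0:ℝ) t := ⟨hs.1, hs.2.le⟩
    have hus : 0 < f s - gp*s :=
      sub_pos.2 (hlt s ⟨hs.1, le_trans hs.2.le ht1.2⟩ hs.2)
    have hws : 0 < f s - gm*s := hwpos s hsIcc
    have h2 := hPhi s hs
    have hwAm : 0 < (f s - gm*s)^Am := Real.rpow_pos_of_pos hws _
    have huAp : (f s - gp*s)^Ap = 2 * (f s - gm*s)^(-Am) := by
      rw [Real.rpow_neg hws.le]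
      field_simp
      rw [mul_comm s gm, eq_div_iff hwAm.ne']
      linarith [h2]
    calc f s - gp*s = ((f s - gp*s)^Ap)^(1/Ap) := by
          rw [← Real.rpow_mul hus.le, mul_one_div_cancel hApne, Real.rpow_one]
      _ = G s := by rw [huAp]
  have hfct : ContinuousOn f (Icc 0 t) := hf.mono (Icc_subset_Icc le_rfl ht1.2)
  have htmem : t ∈ Icc (0:ℝ) t := right_mem_Icc.mpr htpos.le
  have hwct : ContinuousWithinAt (fun s => f s - gm*s) (Icc 0 t) t :=
    (hfct.sub ((continuous_const.mul continuous_id).continuousOn)).continuousWithinAt htmem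
  have huct : ContinuousWithinAt (fun s => f s - gp*s) (Icc 0 t) t :=
    (hfct.sub ((continuous_const.mul continuous_id).continuousOn)).continuousWithinAt htmem
  have hwt : 0 < f t - gm*t := hwpos t htmem
  have hGct : ContinuousWithinAt G (Icc 0 t) t := by
    apply ContinuousWithinAt.rpow_const
    · exact continuousWithinAt_const.mul (hwct.rpow_const (Or.inl hwt.ne'))
    · left
      have : 0 < (f t - gm*t) ^ (-Am) := Real.rpow_pos_of_pos hwt _
      positivity
  have hne : (nhdsWithin t (Ico 0 t)).NeBot := by
    rw [← mem_closure_iff_nhdsWithin_neBot, closure_Ico htpos.ne]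
    exact right_mem_Icc.mpr htpos.le
  have h1 : Filter.Tendsto (fun s => f s - gp*s) (nhdsWithin t (Ico 0 t))
      (nhds (f t - gp*t)) :=
    huct.tendsto.mono_left (nhdsWithin_mono t Ico_subset_Icc_self)
  have h2 : Filter.Tendsto (fun s => f s - gp*s) (nhdsWithin t (Ico 0 t))
      (nhds (G t)) :=
    (hGct.tendsto.mono_left (nhdsWithin_mono t Ico_subset_Icc_self)).congr'
      (Filter.eventuallyEq_of_mem self_mem_nhdsWithin (fun s hs => (hEq s hs).symm))
  have huniq : f t - gp*t = G t := tendsto_nhds_unique h1 h2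
  have hGt : 0 < G t := Real.rpow_pos_of_pos (by positivity) _
  rw [hft] at huniq
  simp at huniq
  rw [← huniq] at hGt
  linarith

/-- For c > 0 and f the solution of f'(r) = cr/(f(r)−r/2), f(0) = 1/2,
the following are equivalent: (a) 2c = f(1)² − f(1)/2;
(b) f(1) = (1 + √(1+32c))/4; (c) h(c) = 1. -/
theorem stmt16 (c : ℝ) (hc : 0 < c) (f : ℝ → ℝ)
    (hf : ContinuousOn f (Set.Icc 0 1)) (hf0 : f 0 = 1/2)
    (hder : ∀ r ∈ Set.Ico (0:ℝ) 1,
      HasDerivWithinAt f (c * r / (f r - r/2)) (Set.Icc 0 1) r) :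
    ((2*c = (f 1)^2 - (f 1)/2) ↔ (f 1 = (1 + Real.sqrt (1 + 32*c))/4)) ∧
    ((f 1 = (1 + Real.sqrt (1 + 32*c))/4) ↔ hAux c = 1) := by
  have h16 : (0:ℝ) < 1 + 16*c := by linarith
  have h32 : (0:ℝ) < 1 + 32*c := by linarith
  set b : ℝ := Real.sqrt (1 + 16*c) with hbdef
  set a : ℝ := Real.sqrt (1 + 32*c) with hadef
  have hb2 : b^2 = 1 + 16*c := Real.sq_sqrt h16.le
  have ha2 : a^2 = 1 + 32*c := Real.sq_sqrt h32.le
  have hb1 : 1 < b := by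
    rw [hbdef]
    exact (Real.lt_sqrt zero_le_one).mpr (by nlinarith)
  have hba : b < a := by
    rw [hbdef, hadef]
    exact Real.sqrt_lt_sqrt h16.le (by linarith)
  have ha1 : 1 < a := lt_trans hb1 hba
  have hb0 : (0:ℝ) < b := lt_trans one_pos hb1
  set gp : ℝ := (1+b)/4 with hgp
  set gm : ℝ := (1-b)/4 with hgm
  set Ap : ℝ := -(b-1)/(2*b) with hAp
  set Am : ℝ := -(b+1)/(2*b) with hAm
  have hApneg : Ap < 0 := by
    rw [hAp, neg_div]
    exact neg_neg_iff_pos.mpr (div_pos (by linarith) (by linarith))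
  have hAmneg : Am < 0 := by
    rw [hAm, neg_div]
    exact neg_neg_iff_pos.mpr (div_pos (by linarith) (by linarith))
  have habove := above_line c b hc hb1 hb2 f hf hf0 hder
  have hf1 : gp < f 1 := by
    have := habove 1 ⟨zero_le_one, le_rfl⟩
    linarith [this]
  have hPhi1 : (f 1 - gp)^Ap * (f 1 - gm)^Am = 2 := by
    have h := phi_const c b hc hb1 hb2 f hf hf0 hder 1 ⟨zero_le_one, le_rfl⟩
      (fun s hs => habove s hs)
    rw [mul_one, mul_one] at h
    exact h
  -- part 1
  have part1 : (2*c = (f 1)^2 - (f 1)/2) ↔ (f 1 = (1 + a)/4) := by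
    constructor
    · intro h
      have hkey : (f 1 - (1+a)/4) * (f 1 - (1-a)/4) = 0 := by
        linear_combination -h - ha2/16
      have h2 : 0 < f 1 - (1-a)/4 := by
        rw [hgp] at hf1
        linarith
      rcases mul_eq_zero.mp hkey with h3 | h3
      · linarith [sub_eq_zero.mp h3]
      · linarith
    · intro h
      rw [h]
      linear_combination -ha2/16
  -- part 2 setup
  have habp : (0:ℝ) < a - b := by linarith
  have habm : (0:ℝ) < a + b := by linarith
  set Q : ℝ := ((a-b)/4)^Ap * ((a+b)/4)^Am with hQdef
  have hQpos : 0 < Q :=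
    mul_pos (Real.rpow_pos_of_pos (by positivity) _) (Real.rpow_pos_of_pos (by positivity) _)
  have hprodab : (a-b)*(a+b) = 16*c := by linear_combination ha2 - hb2
  have h2Ap : Ap + Ap = -1 + 1/b := by rw [hAp]; field_simp; ring
  have h2Am : Am + Am = -1 + -(1/b) := by rw [hAm]; field_simp; ring
  have hfirst : ((a-b)/4 : ℝ)^(-1:ℝ) * ((a+b)/4)^(-1:ℝ) = 1/c := by
    rw [Real.rpow_neg_one, Real.rpow_neg_one]
    rw [← mul_inv, ← one_div]
    congr 1
    rw [div_mul_div_comm]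
    rw [div_eq_iff (by norm_num : (4*4:ℝ) ≠ 0)]
    linear_combination hprodab
  have hsecond : ((a-b)/4 : ℝ)^(1/b) * ((a+b)/4)^(-(1/b)) = ((a-b)/(a+b))^(1/b) := by
    rw [Real.rpow_neg (by positivity : (0:ℝ) ≤ (a+b)/4), ← div_eq_mul_inv,
      ← Real.div_rpow (by positivity : (0:ℝ) ≤ (a-b)/4) (by positivity : (0:ℝ) ≤ (a+b)/4)]
    congr 1
    rw [div_div_div_comm]
    norm_num
  have hQ2 : Q^2 = (1/c) * ((a-b)/(a+b))^(1/b) := by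
    have e1 : Q^2 = ((a-b)/4)^(Ap+Ap) * ((a+b)/4)^(Am+Am) := by
      rw [Real.rpow_add (by positivity), Real.rpow_add (by positivity)]
      ring
    rw [e1, h2Ap, h2Am, Real.rpow_add (by positivity : (0:ℝ) < (a-b)/4),
      Real.rpow_add (by positivity : (0:ℝ) < (a+b)/4)]
    rw [mul_mul_mul_comm, hfirst, hsecond]
  have hAuxQ : hAux c = Q^2/4 := by
    simp only [hAux]
    rw [← hbdef, ← hadef, hQ2]
    ring
  refine ⟨part1, ?_, ?_⟩
  · intro h
    have hfgp : f 1 - gp = (a-b)/4 := by rw [h, hgp]; ring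
    have hfgm : f 1 - gm = (a+b)/4 := by rw [h, hgm]; ring
    have hQ2' : Q = 2 := by rw [hQdef, ← hfgp, ← hfgm]; exact hPhi1
    rw [hAuxQ, hQ2']
    norm_num
  · intro h
    rw [hAuxQ] at h
    have hQ4 : Q^2 = 4 := by linarith
    have hQeq : Q = 2 := by
      have hz : (Q-2)*(Q+2) = 0 := by linear_combination hQ4
      rcases mul_eq_zero.mp hz with h3 | h3
      · linarith
      · linarith
    have hyg : gp < (1+a)/4 := by rw [hgp]; linarith
    have hPsi : ((1+a)/4 - gp)^Ap * ((1+a)/4 - gm)^Am = 2 := by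
      have e1 : (1+a)/4 - gp = (a-b)/4 := by rw [hgp]; ring
      have e2 : (1+a)/4 - gm = (a+b)/4 := by rw [hgm]; ring
      rw [e1, e2, ← hQdef]
      exact hQeq
    have key : ∀ y z : ℝ, gp < y → y < z →
        (z-gp)^Ap * (z-gm)^Am < (y-gp)^Ap * (y-gm)^Am := by
      intro y z hy hyz
      have hgm_lt_gp : gm < gp := by rw [hgm, hgp]; linarith
      have h1 : (z-gp)^Ap < (y-gp)^Ap :=
        Real.rpow_lt_rpow_of_neg (by linarith) (by linarith) hApneg
      have h2 : (z-gm)^Am < (y-gm)^Am :=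
        Real.rpow_lt_rpow_of_neg (by linarith) (by linarith) hAmneg
      exact mul_lt_mul'' h1 h2 (Real.rpow_pos_of_pos (by linarith) _).le
        (Real.rpow_pos_of_pos (by linarith) _).le
    rcases lt_trichotomy (f 1) ((1+a)/4) with hlt | heq | hgt
    · exfalso
      have hk := key (f 1) ((1+a)/4) hf1 hlt
      rw [hPhi1, hPsi] at hk
      exact lt_irrefl _ hk
    · exact heq
    · exfalso
      have hk := key ((1+a)/4) (f 1) hyg hgt
      rw [hPhi1, hPsi] at hk
      exact lt_irrefl _ hk
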